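/- Lebesgue's space-filling curve theorem: the map F²_l: [0,1] → [0,1]², defined to equal F² on the Cantor set C and extended by linear interpolation on each removed interval — F²_l(x) = (1/(b−a))[F²(a)(b−x) + F²(b)(x−a)] for x in a removed interval (a,b) — is continuous on all of [0,1] and maps [0,1] onto the unit square [0,1]². In particular, there exists a continuous surjection from [0,1] onto [0,1]². -/

import Mathlib

/-- The Cantor ternary set: reals admitting a ternary expansion with all digits in {0,2}
(digits indexed from 0, the k-th digit having weight 3^{-(k+1)}). -/
def cantorTernarySet : Set ℝ :=
  {x | ∃ ε : ℕ → ℝ, (∀ k, ε k = 0 ∨ ε k = 2) ∧ x = ∑' k : ℕ, ε k / 3 ^ (k + 1)}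

/-- `G` agrees on the Cantor set with the Lebesgue digit-interleaving map
`F² : C → [0,1]²`, splitting the ternary digit sequence into its odd- and
even-indexed subsequences read as binary digits. -/
def IsLebesgueMap2 (G : ℝ → ℝ × ℝ) : Prop :=
  ∀ ε : ℕ → ℝ, (∀ k, ε k = 0 ∨ ε k = 2) →
    G (∑' k : ℕ, ε k / 3 ^ (k + 1)) =
      (∑' k : ℕ, (ε (2 * k) / 2) / 2 ^ (k + 1),
       ∑' k : ℕ, (ε (2 * k + 1) / 2) / 2 ^ (k + 1))

namespace LSFC

lemma summable_of_bound {c r : ℝ} (hr0 : 0 ≤ r) (hr1 : r < 1) {f : ℕ → ℝ}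
    (h : ∀ k, |f k| ≤ c * r ^ k) : Summable f :=
  Summable.of_norm_bounded ((summable_geometric_of_lt_one hr0 hr1).mul_left c) h

lemma tsum_abs_le {c r : ℝ} (hr0 : 0 ≤ r) (hr1 : r < 1) {f : ℕ → ℝ}
    (h : ∀ k, |f k| ≤ c * r ^ k) : |∑' k, f k| ≤ c * (1 - r)⁻¹ := by
  have hs : Summable f := summable_of_bound hr0 hr1 h
  have h1 : ‖∑' k, f k‖ ≤ ∑' k, ‖f k‖ := norm_tsum_le_tsum_norm (by simpa using hs.abs)
  rw [Real.norm_eq_abs] at h1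
  have h2 : ∑' k, |f k| ≤ ∑' k : ℕ, c * r ^ k :=
    Summable.tsum_le_tsum h hs.abs ((summable_geometric_of_lt_one hr0 hr1).mul_left c)
  have h3 : ∑' k : ℕ, c * r ^ k = c * (1 - r)⁻¹ := by
    rw [tsum_mul_left, tsum_geometric_of_lt_one hr0 hr1]
  have h4 : ∑' k, ‖f k‖ = ∑' k, |f k| := by simp [Real.norm_eq_abs]
  linarith

lemma pow3 (k : ℕ) : (2:ℝ) / 3 ^ (k+1) = 2/3 * (1/3) ^ k := by
  rw [div_pow, one_pow, pow_succ]; field_simp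

lemma pow2 (k : ℕ) : (1:ℝ) / 2 ^ (k+1) = 1/2 * (1/2) ^ k := by
  rw [div_pow, one_pow, pow_succ]; field_simp

lemma tern_bound {ε : ℕ → ℝ} (hε : ∀ k, ε k = 0 ∨ ε k = 2) (k : ℕ) :
    |ε k / 3 ^ (k + 1)| ≤ 2/3 * (1/3) ^ k := by
  have h2 : |ε k| ≤ 2 := by rcases hε k with h | h <;> rw [h] <;> norm_num
  calc |ε k / 3 ^ (k+1)| = |ε k| / 3 ^ (k+1) := by
        rw [abs_div, abs_of_nonneg (by positivity : (0:ℝ) ≤ 3 ^ (k+1))]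
    _ ≤ 2 / 3 ^ (k+1) := by gcongr
    _ = 2/3 * (1/3) ^ k := pow3 k

lemma bin_bound {u : ℕ → ℝ} (hu : ∀ k, |u k| ≤ 1) (k : ℕ) :
    |u k / 2 ^ (k + 1)| ≤ 1/2 * (1/2) ^ k := by
  calc |u k / 2 ^ (k+1)| = |u k| / 2 ^ (k+1) := by
        rw [abs_div, abs_of_nonneg (by positivity : (0:ℝ) ≤ 2 ^ (k+1))]
    _ ≤ 1 / 2 ^ (k+1) := by gcongr; exact hu k
    _ = 1/2 * (1/2) ^ k := pow2 k

lemma summable_tern {ε : ℕ → ℝ} (hε : ∀ k, ε k = 0 ∨ ε k = 2) :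
    Summable (fun k : ℕ => ε k / 3 ^ (k + 1)) :=
  summable_of_bound (by norm_num) (by norm_num) (tern_bound hε)

lemma summable_bin {u : ℕ → ℝ} (hu : ∀ k, |u k| ≤ 1) :
    Summable (fun k : ℕ => u k / 2 ^ (k + 1)) :=
  summable_of_bound (by norm_num) (by norm_num) (bin_bound hu)

lemma tsum_two_thirds : ∑' k : ℕ, (2:ℝ) / 3 ^ (k + 1) = 1 := by
  rw [tsum_congr pow3, tsum_mul_left, tsum_geometric_of_lt_one (by norm_num) (by norm_num)]
  norm_num

lemma tsum_halves : ∑' k : ℕ, (1:ℝ) / 2 ^ (k + 1) = 1 := by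
  rw [tsum_congr pow2, tsum_mul_left, tsum_geometric_of_lt_one (by norm_num) (by norm_num)]
  norm_num

lemma tern_mem {ε : ℕ → ℝ} (hε : ∀ k, ε k = 0 ∨ ε k = 2) :
    (∑' k : ℕ, ε k / 3 ^ (k + 1)) ∈ Set.Icc (0:ℝ) 1 := by
  constructor
  · apply tsum_nonneg
    intro k
    rcases hε k with h | h <;> rw [h] <;> positivity
  · rw [← tsum_two_thirds]
    apply Summable.tsum_le_tsum _ (summable_tern hε)
      (summable_of_bound (c := 2/3) (r := 1/3) (by norm_num) (by norm_num)
        (fun k => by rw [abs_of_nonneg (by positivity)]; exact le_of_eq (pow3 k)))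
    intro k
    rcases hε k with h | h <;> rw [h] <;> gcongr <;> norm_num

lemma bin_mem {u : ℕ → ℝ} (hu : ∀ k, u k = 0 ∨ u k = 1) :
    (∑' k : ℕ, u k / 2 ^ (k + 1)) ∈ Set.Icc (0:ℝ) 1 := by
  have hu1 : ∀ k, |u k| ≤ 1 := fun k => by rcases hu k with h | h <;> rw [h] <;> norm_num
  constructor
  · apply tsum_nonneg
    intro k
    rcases hu k with h | h <;> rw [h] <;> positivity
  · rw [← tsum_halves]
    apply Summable.tsum_le_tsum _ (summable_bin hu1)
      (summable_of_bound (c := 1/2) (r := 1/2) (by norm_num) (by norm_num)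
        (fun k => by rw [abs_of_nonneg (by positivity)]; exact le_of_eq (pow2 k)))
    intro k
    rcases hu k with h | h <;> rw [h] <;> gcongr <;> norm_num

lemma digits_agree {ε δ : ℕ → ℝ} (hε : ∀ k, ε k = 0 ∨ ε k = 2)
    (hδ : ∀ k, δ k = 0 ∨ δ k = 2) (m : ℕ)
    (h : |(∑' k : ℕ, ε k / 3 ^ (k + 1)) - ∑' k : ℕ, δ k / 3 ^ (k + 1)| < (1/3) ^ m) :
    ∀ k < m, ε k = δ k := by
  by_contra hc
  push_neg at hc
  obtain ⟨k0, hk0m, hk0⟩ := hc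
  classical
  have hex : ∃ k, ε k ≠ δ k := ⟨k0, hk0⟩
  set j := Nat.find hex with hjdef
  have hjne : ε j ≠ δ j := Nat.find_spec hex
  have hjmin : ∀ i < j, ε i = δ i := fun i hi => by
    by_contra hne; exact absurd (Nat.find_le hne) (not_le.mpr hi)
  have hjm : j < m := lt_of_le_of_lt (Nat.find_le hk0) hk0m
  set g : ℕ → ℝ := fun k => (ε k - δ k) / 3 ^ (k + 1) with hg
  have hgb : ∀ k, |g k| ≤ 2/3 * (1/3) ^ k := by
    intro k
    have h2 : |ε k - δ k| ≤ 2 := by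
      rcases hε k with h1 | h1 <;> rcases hδ k with h2 | h2 <;> rw [h1, h2] <;> norm_num
    calc |g k| = |ε k - δ k| / 3 ^ (k+1) := by
          rw [hg, abs_div, abs_of_nonneg (by positivity : (0:ℝ) ≤ 3 ^ (k+1))]
      _ ≤ 2 / 3 ^ (k+1) := by gcongr
      _ = 2/3 * (1/3) ^ k := pow3 k
  have hgs : Summable g := summable_of_bound (by norm_num) (by norm_num) hgb
  have hD : ∑' k, g k = (∑' k : ℕ, ε k / 3 ^ (k + 1)) - ∑' k : ℕ, δ k / 3 ^ (k + 1) := by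
    rw [← Summable.tsum_sub (summable_tern hε) (summable_tern hδ)]
    exact tsum_congr fun k => by rw [hg]; ring
  have hsplit := Summable.sum_add_tsum_nat_add (f := g) (j+1) hgs
  have hfin : ∑ i ∈ Finset.range (j+1), g i = g j := by
    rw [Finset.sum_range_succ]
    have hz : ∑ i ∈ Finset.range j, g i = 0 :=
      Finset.sum_eq_zero fun i hi => by
        show (ε i - δ i) / 3 ^ (i + 1) = 0
        rw [hjmin i (Finset.mem_range.mp hi)]; ring
    rw [hz, zero_add]
  have htail : |∑' k : ℕ, g (k + (j+1))| ≤ (1/3) ^ (j+1) := by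
    have hb : ∀ k, |g (k + (j+1))| ≤ (2/3 * (1/3)^(j+1)) * (1/3) ^ k := by
      intro k
      calc |g (k + (j+1))| ≤ 2/3 * (1/3) ^ (k + (j+1)) := hgb _
        _ = (2/3 * (1/3)^(j+1)) * (1/3) ^ k := by rw [pow_add]; ring
    calc |∑' k : ℕ, g (k + (j+1))| ≤ (2/3 * (1/3)^(j+1)) * (1 - 1/3)⁻¹ :=
          tsum_abs_le (by norm_num) (by norm_num) hb
      _ = (1/3) ^ (j+1) := by norm_num; ring
  have hgj : |g j| = 2 * (1/3) ^ (j+1) := by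
    have h2 : |ε j - δ j| = 2 := by
      rcases hε j with h1 | h1 <;> rcases hδ j with h2 | h2
      · exact absurd (h1.trans h2.symm) hjne
      · rw [h1, h2]; norm_num
      · rw [h1, h2]; norm_num
      · exact absurd (h1.trans h2.symm) hjne
    show |(ε j - δ j) / 3 ^ (j + 1)| = 2 * (1/3) ^ (j+1)
    rw [abs_div, abs_of_nonneg (by positivity : (0:ℝ) ≤ 3 ^ (j+1)), h2,
      div_pow, one_pow]
    ring
  have hDval : (∑' k : ℕ, ε k / 3 ^ (k + 1)) - ∑' k : ℕ, δ k / 3 ^ (k + 1)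
      = g j + ∑' k : ℕ, g (k + (j+1)) := by rw [← hD, ← hsplit, hfin]
  set T := ∑' k : ℕ, g (k + (j+1)) with hT
  have habs : |g j| ≤ |g j + T| + |T| := by
    calc |g j| = |(g j + T) + (-T)| := by ring_nf
      _ ≤ |g j + T| + |-T| := abs_add_le _ _
      _ = |g j + T| + |T| := by rw [abs_neg]
  have hmono : (1/3:ℝ) ^ m ≤ (1/3) ^ (j+1) :=
    pow_le_pow_of_le_one (by norm_num) (by norm_num) hjm
  rw [hDval] at h
  have : (1/3:ℝ)^(j+1) ≤ |g j + T| := by linarith [habs, htail, hgj.ge, hgj.le]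
  linarith

lemma bin_close {u v : ℕ → ℝ} (hu : ∀ k, u k = 0 ∨ u k = 1)
    (hv : ∀ k, v k = 0 ∨ v k = 1) (n : ℕ)
    (h : ∀ k < n, u k = v k) :
    |(∑' k : ℕ, u k / 2 ^ (k + 1)) - ∑' k : ℕ, v k / 2 ^ (k + 1)| ≤ (1/2) ^ n := by
  have hu1 : ∀ k, |u k| ≤ 1 := fun k => by rcases hu k with h' | h' <;> rw [h'] <;> norm_num
  have hv1 : ∀ k, |v k| ≤ 1 := fun k => by rcases hv k with h' | h' <;> rw [h'] <;> norm_num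
  set g : ℕ → ℝ := fun k => (u k - v k) / 2 ^ (k + 1) with hg
  have hgb : ∀ k, |g k| ≤ 1/2 * (1/2) ^ k := by
    intro k
    have h2 : |u k - v k| ≤ 1 := by
      rcases hu k with h1 | h1 <;> rcases hv k with h2 | h2 <;> rw [h1, h2] <;> norm_num
    calc |g k| = |u k - v k| / 2 ^ (k+1) := by
          rw [hg, abs_div, abs_of_nonneg (by positivity : (0:ℝ) ≤ 2 ^ (k+1))]
      _ ≤ 1 / 2 ^ (k+1) := by gcongr
      _ = 1/2 * (1/2) ^ k := pow2 k
  have hgs : Summable g := summable_of_bound (by norm_num) (by norm_num) hgb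
  have hD : ∑' k, g k = (∑' k : ℕ, u k / 2 ^ (k + 1)) - ∑' k : ℕ, v k / 2 ^ (k + 1) := by
    rw [← Summable.tsum_sub (summable_bin hu1) (summable_bin hv1)]
    exact tsum_congr fun k => by rw [hg]; ring
  have hsplit := Summable.sum_add_tsum_nat_add (f := g) n hgs
  have hfin : ∑ i ∈ Finset.range n, g i = 0 :=
    Finset.sum_eq_zero fun i hi => by
      show (u i - v i) / 2 ^ (i + 1) = 0
      rw [h i (Finset.mem_range.mp hi)]; ring
  have htail : |∑' k : ℕ, g (k + n)| ≤ (1/2) ^ n := by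
    have hb : ∀ k, |g (k + n)| ≤ (1/2 * (1/2)^n) * (1/2) ^ k := by
      intro k
      calc |g (k + n)| ≤ 1/2 * (1/2) ^ (k + n) := hgb _
        _ = (1/2 * (1/2)^n) * (1/2) ^ k := by rw [pow_add]; ring
    calc |∑' k : ℕ, g (k + n)| ≤ (1/2 * (1/2)^n) * (1 - 1/2)⁻¹ :=
          tsum_abs_le (by norm_num) (by norm_num) hb
      _ = (1/2) ^ n := by ring
  rw [← hD, ← hsplit, hfin, zero_add]
  exact htail

open Classical in
/-- remainder sequence for greedy binary expansion -/
noncomputable def binRem (y : ℝ) : ℕ → ℝ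
  | 0 => y
  | n+1 => if (1/2:ℝ)^(n+1) ≤ binRem y n then binRem y n - (1/2)^(n+1) else binRem y n

open Classical in
noncomputable def binDig (y : ℝ) (n : ℕ) : ℝ :=
  if (1/2:ℝ)^(n+1) ≤ binRem y n then 1 else 0

lemma binDig_mem (y : ℝ) (n : ℕ) : binDig y n = 0 ∨ binDig y n = 1 := by
  unfold binDig; split_ifs <;> simp

lemma binRem_bounds {y : ℝ} (h0 : 0 ≤ y) (h1 : y ≤ 1) (n : ℕ) :
    0 ≤ binRem y n ∧ binRem y n ≤ (1/2) ^ n := by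
  induction n with
  | zero => exact ⟨h0, by simpa [binRem] using h1⟩
  | succ n ih =>
    rw [binRem]
    split_ifs with hc
    · constructor
      · linarith
      · have h2 : binRem y n ≤ (1/2)^n := ih.2
        rw [pow_succ] at *
        linarith
    · push_neg at hc
      exact ⟨ih.1, hc.le⟩

lemma binRem_step (y : ℝ) (n : ℕ) :
    binRem y (n+1) = binRem y n - binDig y n * (1/2) ^ (n+1) := by
  rw [binRem, binDig]
  split_ifs <;> ring

lemma binRem_eq (y : ℝ) (n : ℕ) :
    binRem y n = y - ∑ i ∈ Finset.range n, binDig y i / 2 ^ (i+1) := by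
  induction n with
  | zero => simp [binRem]
  | succ n ih =>
    rw [Finset.sum_range_succ, binRem_step, ih]
    have h2 : binDig y n / 2 ^ (n+1) = binDig y n * (1/2)^(n+1) := by
      rw [div_pow, one_pow]; ring
    rw [h2]; ring

lemma exists_binary {y : ℝ} (h0 : 0 ≤ y) (h1 : y ≤ 1) :
    ∃ u : ℕ → ℝ, (∀ k, u k = 0 ∨ u k = 1) ∧ y = ∑' k : ℕ, u k / 2 ^ (k + 1) := by
  refine ⟨binDig y, binDig_mem y, ?_⟩
  have hu1 : ∀ k, |binDig y k| ≤ 1 := fun k => by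
    rcases binDig_mem y k with h | h <;> rw [h] <;> norm_num
  have hs : Summable (fun k : ℕ => binDig y k / 2 ^ (k + 1)) := summable_bin hu1
  have htend : Filter.Tendsto (fun n => ∑ i ∈ Finset.range n, binDig y i / 2 ^ (i+1))
      Filter.atTop (nhds y) := by
    have hrem : Filter.Tendsto (fun n => binRem y n) Filter.atTop (nhds 0) := by
      apply squeeze_zero (fun n => (binRem_bounds h0 h1 n).1)
        (fun n => (binRem_bounds h0 h1 n).2)
      exact tendsto_pow_atTop_nhds_zero_of_lt_one (by norm_num) (by norm_num)
    have h2 : (fun n => ∑ i ∈ Finset.range n, binDig y i / 2 ^ (i+1))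
        = fun n => y - binRem y n := by
      funext n; rw [binRem_eq]; ring
    rw [h2]
    simpa using tendsto_const_nhds.sub hrem
  exact tendsto_nhds_unique htend hs.hasSum.tendsto_sum_nat

noncomputable def cantorF (χ : ℕ → Bool) : ℝ :=
  ∑' k : ℕ, (if χ k then (2:ℝ) else 0) / 3 ^ (k + 1)

lemma cantorF_continuous : Continuous cantorF := by
  apply continuous_tsum (u := fun k => 2/3 * (1/3 : ℝ) ^ k)
  · intro k
    exact ((continuous_of_discreteTopology
      (f := fun b : Bool => (if b then (2:ℝ) else 0) / 3 ^ (k + 1)))).comp (continuous_apply k)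
  · exact (summable_geometric_of_lt_one (by norm_num) (by norm_num)).mul_left _
  · intro k χ
    rw [Real.norm_eq_abs, ← pow3 k]
    have h2 : (0:ℝ) < 3 ^ (k+1) := by positivity
    rw [abs_div, abs_of_nonneg h2.le]
    gcongr
    split_ifs <;> simp

lemma cantor_eq_range : cantorTernarySet = Set.range cantorF := by
  ext x
  constructor
  · rintro ⟨ε, hε, rfl⟩
    classical
    refine ⟨fun k => if ε k = 2 then true else false, ?_⟩
    unfold cantorF
    apply tsum_congr
    intro k
    rcases hε k with h | h <;> simp [h]
  · rintro ⟨χ, rfl⟩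
    refine ⟨fun k => if χ k then 2 else 0, fun k => ?_, rfl⟩
    by_cases h : χ k <;> simp [h]

lemma isCompact_cantor : IsCompact cantorTernarySet := by
  rw [cantor_eq_range]
  exact isCompact_range cantorF_continuous

lemma isClosed_cantor : IsClosed cantorTernarySet := isCompact_cantor.isClosed

lemma zero_mem_cantor : (0:ℝ) ∈ cantorTernarySet :=
  ⟨fun _ => 0, fun _ => Or.inl rfl, by simp⟩

lemma one_mem_cantor : (1:ℝ) ∈ cantorTernarySet :=
  ⟨fun _ => 2, fun _ => Or.inr rfl, tsum_two_thirds.symm⟩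

lemma cantor_subset_Icc : cantorTernarySet ⊆ Set.Icc (0:ℝ) 1 := by
  rintro x ⟨ε, hε, rfl⟩
  exact tern_mem hε

lemma prod_norm_le {a b c d m : ℝ} (h1 : |a - c| ≤ m) (h2 : |b - d| ≤ m) :
    ‖((a, b) : ℝ × ℝ) - (c, d)‖ ≤ m := by
  rw [Prod.mk_sub_mk, Prod.norm_def]
  simp only [Real.norm_eq_abs]
  exact max_le h1 h2

/-- every point of `[0,1] \ C` lies in a removed interval with endpoints in `C`. -/
lemma removed_interval {x : ℝ} (hx : x ∈ Set.Icc (0:ℝ) 1) (hxC : x ∉ cantorTernarySet) :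
    ∃ a b : ℝ, a ∈ cantorTernarySet ∧ b ∈ cantorTernarySet ∧ a < x ∧ x < b ∧
      Set.Ioo a b ∩ cantorTernarySet = ∅ := by
  have hne1 : (cantorTernarySet ∩ Set.Icc 0 x).Nonempty := ⟨0, zero_mem_cantor, le_refl 0, hx.1⟩
  have hne2 : (cantorTernarySet ∩ Set.Icc x 1).Nonempty := ⟨1, one_mem_cantor, hx.2, le_refl 1⟩
  have hc1 : IsCompact (cantorTernarySet ∩ Set.Icc 0 x) :=
    isCompact_cantor.inter_right isClosed_Icc
  have hc2 : IsCompact (cantorTernarySet ∩ Set.Icc x 1) :=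
    isCompact_cantor.inter_right isClosed_Icc
  set a := sSup (cantorTernarySet ∩ Set.Icc 0 x) with ha
  set b := sInf (cantorTernarySet ∩ Set.Icc x 1) with hb
  have hamem := hc1.sSup_mem hne1
  have hbmem := hc2.sInf_mem hne2
  have haC : a ∈ cantorTernarySet := hamem.1
  have hbC : b ∈ cantorTernarySet := hbmem.1
  have hax : a < x := lt_of_le_of_ne hamem.2.2 (fun h => hxC (h ▸ haC))
  have hxb : x < b := lt_of_le_of_ne hbmem.2.1 (fun h => hxC (h.symm ▸ hbC))
  refine ⟨a, b, haC, hbC, hax, hxb, ?_⟩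
  rw [Set.eq_empty_iff_forall_notMem]
  rintro y ⟨⟨hay, hyb⟩, hyC⟩
  have hy01 := cantor_subset_Icc hyC
  rcases le_or_gt y x with hyx | hxy
  · have : y ≤ a := le_csSup hc1.bddAbove ⟨hyC, hy01.1, hyx⟩
    linarith
  · have : b ≤ y := csInf_le hc2.bddBelow ⟨hyC, hxy.le, hy01.2⟩
    linarith

end LSFC

open LSFC in
/-- Lebesgue's space-filling curve theorem: the extension `F²_l` of the Lebesgue map
`F²`, obtained by linear interpolation on each removed interval `(a,b)` (a connected
component of `[0,1] \ C` with endpoints in `C`), is continuous on `[0,1]` and maps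
`[0,1]` onto the unit square; in particular there is a continuous surjection from
`[0,1]` onto `[0,1]²`. -/
theorem lebesgue_space_filling_curve
    (G : ℝ → ℝ × ℝ) (hG : IsLebesgueMap2 G)
    (Gl : ℝ → ℝ × ℝ)
    (hagree : ∀ x ∈ cantorTernarySet, Gl x = G x)
    (hinterp : ∀ a b : ℝ, a ∈ cantorTernarySet → b ∈ cantorTernarySet → a < b →
      Set.Ioo a b ∩ cantorTernarySet = ∅ →
      ∀ x ∈ Set.Ioo a b,
        Gl x = ((b - x) / (b - a)) • G a + ((x - a) / (b - a)) • G b) :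
    (ContinuousOn Gl (Set.Icc 0 1) ∧
        Set.SurjOn Gl (Set.Icc (0 : ℝ) 1) (Set.Icc (0 : ℝ) 1 ×ˢ Set.Icc (0 : ℝ) 1)) ∧
      ∃ g : ℝ → ℝ × ℝ, ContinuousOn g (Set.Icc 0 1) ∧
        Set.SurjOn g (Set.Icc (0 : ℝ) 1) (Set.Icc (0 : ℝ) 1 ×ˢ Set.Icc (0 : ℝ) 1) := by
  -- the uniform-continuity style estimate for G on the Cantor set
  have keyG : ∀ n : ℕ, ∀ x ∈ cantorTernarySet, ∀ y ∈ cantorTernarySet,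
      |x - y| < (1/3 : ℝ) ^ (2*n) → ‖G x - G y‖ ≤ (1/2 : ℝ) ^ n := by
    rintro n x ⟨ε, hε, rfl⟩ y ⟨δ, hδ, rfl⟩ hxy
    rw [hG ε hε, hG δ hδ]
    have hag : ∀ k < 2*n, ε k = δ k := digits_agree hε hδ (2*n) hxy
    have hu : ∀ k, ε (2*k) / 2 = 0 ∨ ε (2*k) / 2 = 1 := fun k => by
      rcases hε (2*k) with h | h <;> rw [h] <;> norm_num
    have hv : ∀ k, δ (2*k) / 2 = 0 ∨ δ (2*k) / 2 = 1 := fun k => by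
      rcases hδ (2*k) with h | h <;> rw [h] <;> norm_num
    have hu' : ∀ k, ε (2*k+1) / 2 = 0 ∨ ε (2*k+1) / 2 = 1 := fun k => by
      rcases hε (2*k+1) with h | h <;> rw [h] <;> norm_num
    have hv' : ∀ k, δ (2*k+1) / 2 = 0 ∨ δ (2*k+1) / 2 = 1 := fun k => by
      rcases hδ (2*k+1) with h | h <;> rw [h] <;> norm_num
    apply prod_norm_le
    · exact bin_close hu hv n (fun k hk => by rw [hag (2*k) (by omega)])
    · exact bin_close hu' hv' n (fun k hk => by rw [hag (2*k+1) (by omega)])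
  -- crude bound: G-values on the Cantor set are within distance 1 of each other
  have Gbound : ∀ x ∈ cantorTernarySet, ∀ y ∈ cantorTernarySet, ‖G x - G y‖ ≤ 1 := by
    rintro x ⟨ε, hε, rfl⟩ y ⟨δ, hδ, rfl⟩
    rw [hG ε hε, hG δ hδ]
    have hu : ∀ k, ε (2*k) / 2 = 0 ∨ ε (2*k) / 2 = 1 := fun k => by
      rcases hε (2*k) with h | h <;> rw [h] <;> norm_num
    have hv : ∀ k, δ (2*k) / 2 = 0 ∨ δ (2*k) / 2 = 1 := fun k => by
      rcases hδ (2*k) with h | h <;> rw [h] <;> norm_num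
    have hu' : ∀ k, ε (2*k+1) / 2 = 0 ∨ ε (2*k+1) / 2 = 1 := fun k => by
      rcases hε (2*k+1) with h | h <;> rw [h] <;> norm_num
    have hv' : ∀ k, δ (2*k+1) / 2 = 0 ∨ δ (2*k+1) / 2 = 1 := fun k => by
      rcases hδ (2*k+1) with h | h <;> rw [h] <;> norm_num
    apply prod_norm_le
    · have m1 := bin_mem hu; have m2 := bin_mem hv
      rw [abs_le]; constructor <;> [linarith [m1.1, m2.2]; linarith [m1.2, m2.1]]
    · have m1 := bin_mem hu'; have m2 := bin_mem hv'
      rw [abs_le]; constructor <;> [linarith [m1.1, m2.2]; linarith [m1.2, m2.1]]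
  have hcont : ContinuousOn Gl (Set.Icc 0 1) := by
    intro x₀ hx₀
    by_cases hx₀C : x₀ ∈ cantorTernarySet
    · rw [Metric.continuousWithinAt_iff]
      intro ep hep
      obtain ⟨n, hn⟩ : ∃ n : ℕ, (1/2:ℝ)^n < ep/3 :=
        exists_pow_lt_of_lt_one (by linarith) (by norm_num)
      have hpow2 : (0:ℝ) < (1/2:ℝ)^n := by positivity
      have hpow3 : (0:ℝ) < (1/3:ℝ)^(2*n) := by positivity
      have hpow2le : (1/2:ℝ)^n ≤ 1 := pow_le_one₀ (by norm_num) (by norm_num)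
      refine ⟨(1/3:ℝ)^(2*n) * ((1/2)^n * (1/2)), by positivity, ?_⟩
      set d : ℝ := (1/3:ℝ)^(2*n) * ((1/2)^n * (1/2)) with hd
      have hdle : d ≤ (1/3:ℝ)^(2*n) := by
        rw [hd]; nlinarith
      intro x hx hdist
      rw [Real.dist_eq] at hdist
      rw [dist_eq_norm, hagree x₀ hx₀C]
      by_cases hxC : x ∈ cantorTernarySet
      · rw [hagree x hxC]
        have h2 := keyG n x hxC x₀ hx₀C (lt_of_lt_of_le hdist hdle)
        linarith
      · obtain ⟨a, b, haC, hbC, hax, hxb, hab⟩ := removed_interval hx hxC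
        have hba : (0:ℝ) < b - a := by linarith
        have hGlx := hinterp a b haC hbC (by linarith) hab x ⟨hax, hxb⟩
        have hx₀ab : x₀ ≤ a ∨ b ≤ x₀ := by
          by_contra hcon
          push_neg at hcon
          have hmem : x₀ ∈ Set.Ioo a b ∩ cantorTernarySet := ⟨⟨hcon.1, hcon.2⟩, hx₀C⟩
          rw [hab] at hmem; exact hmem
        obtain ⟨hxx₀, hx₀x⟩ := abs_sub_lt_iff.mp hdist
        rcases hx₀ab with hcase | hcase
        · -- x₀ ≤ a : interpolate from the endpoint a
          have h1 : |a - x₀| < d := by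
            rw [abs_of_nonneg (by linarith)]; linarith
          have hGa : ‖G a - G x₀‖ ≤ (1/2:ℝ)^n :=
            keyG n a haC x₀ hx₀C (lt_of_lt_of_le h1 hdle)
          have hdecomp : Gl x - G a = ((x - a)/(b - a)) • (G b - G a) := by
            rw [hGlx, show (b - x)/(b - a) = 1 - (x - a)/(b - a) by field_simp; ring]
            module
          have ht0 : 0 ≤ (x - a)/(b - a) := div_nonneg (by linarith) (by linarith)
          have hnorm1 : ‖Gl x - G a‖ ≤ (1/2:ℝ)^n := by
            rw [hdecomp, norm_smul, Real.norm_eq_abs, abs_of_nonneg ht0]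
            by_cases hba2 : b - a < (1/3:ℝ)^(2*n)
            · have hGba : ‖G b - G a‖ ≤ (1/2:ℝ)^n :=
                keyG n b hbC a haC (by rw [abs_of_nonneg (by linarith)]; linarith)
              have ht1 : (x - a)/(b - a) ≤ 1 := (div_le_one hba).mpr (by linarith)
              calc (x - a)/(b - a) * ‖G b - G a‖ ≤ 1 * ((1/2:ℝ)^n) :=
                    mul_le_mul ht1 hGba (norm_nonneg _) zero_le_one
                _ = (1/2:ℝ)^n := one_mul _
            · push_neg at hba2
              have htle : (x - a)/(b - a) ≤ (1/2:ℝ)^n * (1/2) := by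
                rw [div_le_iff₀ hba]
                refine le_of_lt ?_
                calc x - a < d := by linarith
                  _ = (1/3:ℝ)^(2*n) * ((1/2)^n * (1/2)) := hd
                  _ ≤ (b - a) * ((1/2)^n * (1/2)) := by
                      apply mul_le_mul_of_nonneg_right hba2 (by positivity)
                  _ = (1/2:ℝ)^n * (1/2) * (b - a) := by ring
              have hGb1 : ‖G b - G a‖ ≤ 1 := Gbound b hbC a haC
              calc (x - a)/(b - a) * ‖G b - G a‖ ≤ ((1/2:ℝ)^n * (1/2)) * 1 :=
                    mul_le_mul htle hGb1 (norm_nonneg _) (by positivity)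
                _ ≤ (1/2:ℝ)^n := by linarith
          have htri := dist_triangle (Gl x) (G a) (G x₀)
          rw [dist_eq_norm, dist_eq_norm, dist_eq_norm] at htri
          linarith
        · -- b ≤ x₀ : interpolate from the endpoint b
          have h1 : |b - x₀| < d := by
            rw [abs_of_nonpos (by linarith)]; linarith
          have hGb : ‖G b - G x₀‖ ≤ (1/2:ℝ)^n :=
            keyG n b hbC x₀ hx₀C (lt_of_lt_of_le h1 hdle)
          have hdecomp : Gl x - G b = ((b - x)/(b - a)) • (G a - G b) := by
            rw [hGlx, show (x - a)/(b - a) = 1 - (b - x)/(b - a) by field_simp; ring]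
            module
          have ht0 : 0 ≤ (b - x)/(b - a) := div_nonneg (by linarith) (by linarith)
          have hnorm1 : ‖Gl x - G b‖ ≤ (1/2:ℝ)^n := by
            rw [hdecomp, norm_smul, Real.norm_eq_abs, abs_of_nonneg ht0]
            by_cases hba2 : b - a < (1/3:ℝ)^(2*n)
            · have hGba : ‖G a - G b‖ ≤ (1/2:ℝ)^n :=
                keyG n a haC b hbC (by rw [abs_of_nonpos (by linarith)]; linarith)
              have ht1 : (b - x)/(b - a) ≤ 1 := (div_le_one hba).mpr (by linarith)
              calc (b - x)/(b - a) * ‖G a - G b‖ ≤ 1 * ((1/2:ℝ)^n) :=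
                    mul_le_mul ht1 hGba (norm_nonneg _) zero_le_one
                _ = (1/2:ℝ)^n := one_mul _
            · push_neg at hba2
              have htle : (b - x)/(b - a) ≤ (1/2:ℝ)^n * (1/2) := by
                rw [div_le_iff₀ hba]
                refine le_of_lt ?_
                calc b - x ≤ x₀ - x := by linarith
                  _ < d := hx₀x
                  _ = (1/3:ℝ)^(2*n) * ((1/2)^n * (1/2)) := hd
                  _ ≤ (b - a) * ((1/2)^n * (1/2)) := by
                      apply mul_le_mul_of_nonneg_right hba2 (by positivity)
                  _ = (1/2:ℝ)^n * (1/2) * (b - a) := by ring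
              have hGb1 : ‖G a - G b‖ ≤ 1 := Gbound a haC b hbC
              calc (b - x)/(b - a) * ‖G a - G b‖ ≤ ((1/2:ℝ)^n * (1/2)) * 1 :=
                    mul_le_mul htle hGb1 (norm_nonneg _) (by positivity)
                _ ≤ (1/2:ℝ)^n := by linarith
          have htri := dist_triangle (Gl x) (G b) (G x₀)
          rw [dist_eq_norm, dist_eq_norm, dist_eq_norm] at htri
          linarith
    · -- x₀ is in a removed interval: Gl is locally affine there
      obtain ⟨a, b, haC, hbC, hax, hxb, hab⟩ := removed_interval hx₀ hx₀C
      have hopen : Set.Ioo a b ∈ nhds x₀ := Ioo_mem_nhds hax hxb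
      have hφ : Continuous (fun x : ℝ => ((b - x)/(b - a)) • G a + ((x - a)/(b - a)) • G b) := by
        apply Continuous.add
        · exact (((continuous_const.sub continuous_id).div_const _).smul continuous_const)
        · exact (((continuous_id.sub continuous_const).div_const _).smul continuous_const)
      have hca : ContinuousAt Gl x₀ := by
        apply hφ.continuousAt.congr
        filter_upwards [hopen] with y hy
        exact (hinterp a b haC hbC (lt_trans hax hxb) hab y hy).symm
      exact hca.continuousWithinAt
  have hsurj : Set.SurjOn Gl (Set.Icc (0 : ℝ) 1) (Set.Icc (0 : ℝ) 1 ×ˢ Set.Icc (0 : ℝ) 1) := by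
    rintro ⟨p, q⟩ hpq
    rw [Set.mem_prod] at hpq
    obtain ⟨u, hu, hp⟩ := exists_binary hpq.1.1 hpq.1.2
    obtain ⟨v, hv, hq⟩ := exists_binary hpq.2.1 hpq.2.2
    dsimp only at hp hq
    classical
    set ε : ℕ → ℝ := fun k => if Even k then 2 * u (k/2) else 2 * v (k/2) with hε
    have hεd : ∀ k, ε k = 0 ∨ ε k = 2 := by
      intro k
      rw [hε]; dsimp only
      split_ifs
      · rcases hu (k/2) with h | h <;> rw [h] <;> [left; right] <;> norm_num
      · rcases hv (k/2) with h | h <;> rw [h] <;> [left; right] <;> norm_num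
    have heven : ∀ k, ε (2*k) = 2 * u k := by
      intro k
      rw [hε]; dsimp only
      rw [if_pos ⟨k, by ring⟩]
      have hk : 2*k/2 = k := by omega
      rw [hk]
    have hodd : ∀ k, ε (2*k+1) = 2 * v k := by
      intro k
      rw [hε]; dsimp only
      rw [if_neg (by rw [Nat.even_iff]; omega)]
      have hk : (2*k+1)/2 = k := by omega
      rw [hk]
    have hxC : (∑' k : ℕ, ε k / 3 ^ (k+1)) ∈ cantorTernarySet := ⟨ε, hεd, rfl⟩
    refine ⟨∑' k : ℕ, ε k / 3 ^ (k+1), cantor_subset_Icc hxC, ?_⟩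
    rw [hagree _ hxC, hG ε hεd]
    have h1 : ∑' k : ℕ, (ε (2*k)/2)/2^(k+1) = p := by
      rw [hp]; exact tsum_congr fun k => by rw [heven k]; ring
    have h2 : ∑' k : ℕ, (ε (2*k+1)/2)/2^(k+1) = q := by
      rw [hq]; exact tsum_congr fun k => by rw [hodd k]; ring
    rw [h1, h2]
  exact ⟨⟨hcont, hsurj⟩, ⟨Gl, hcont, hsurj⟩⟩
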